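/- Let ρ be a d×d density matrix and let f₁, ..., f_m be a generalized measurement on ℂ^d. Then the expected spectrum of Alice's local state after her measurement majorizes the spectrum of her current state: for every k with 1 ≤ k ≤ d, ∑_{j=1}^{m} ∑_{i=1}^{k} λ_i(f_j * ρ * f_jᴴ) ≥ ∑_{i=1}^{k} λ_i(ρ). (Here each f_j ρ f_jᴴ is positive semidefinite Hermitian, and λ_i(f_j ρ f_jᴴ) equals p_j times the i-th eigenvalue of the normalized post-measurement state when p_j = trace(f_j ρ f_jᴴ) > 0.) -/

import Mathlib

open Matrix ComplexOrder



open Matrix ComplexOrder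

lemma sum_castLE {d k : ℕ} (hk : k ≤ d) (σ : Fin d → ℝ) :
    ∑ i : Fin k, σ (Fin.castLE hk i)
      = ∑ i ∈ Finset.univ.filter (fun i : Fin d => (i : ℕ) < k), σ i := by
  classical
  set F : ℕ → ℝ := fun n => if h : n < d then σ ⟨n, h⟩ else 0 with hF
  have h1 : ∑ i : Fin k, σ (Fin.castLE hk i) = ∑ i ∈ Finset.range k, F i := by
    rw [← Fin.sum_univ_eq_sum_range]
    refine Finset.sum_congr rfl fun i _ => ?_
    simp only [hF]
    rw [dif_pos (lt_of_lt_of_le i.isLt hk)]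
    rfl
  have h2 : ∑ i ∈ Finset.univ.filter (fun i : Fin d => (i : ℕ) < k), σ i
      = ∑ i ∈ Finset.range d, (if i < k then F i else 0) := by
    rw [← Fin.sum_univ_eq_sum_range (fun n => if n < k then F n else 0), Finset.sum_filter]
    refine Finset.sum_congr rfl fun i _ => ?_
    by_cases h : (i : ℕ) < k <;> simp [h, hF, i.isLt]
  rw [h1, h2, ← Finset.sum_filter]
  congr 1
  ext i
  simp only [Finset.mem_filter, Finset.mem_range]
  omega

lemma comb {d k : ℕ} (hk : k ≤ d) (σ c : Fin d → ℝ) (hσ : Antitone σ)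
    (hσ0 : ∀ i, 0 ≤ σ i) (hc0 : ∀ i, 0 ≤ c i) (hc1 : ∀ i, c i ≤ 1)
    (hcs : ∑ i, c i ≤ (k : ℝ)) :
    ∑ i, c i * σ i ≤ ∑ i : Fin k, σ (Fin.castLE hk i) := by
  rw [sum_castLE hk σ]
  rcases eq_or_lt_of_le hk with rfl | hkd
  · have : Finset.univ.filter (fun i : Fin k => (i : ℕ) < k) = Finset.univ := by
      ext i; simp [i.isLt]
    rw [this]
    exact Finset.sum_le_sum fun i _ => by
      nlinarith [hc0 i, hc1 i, hσ0 i]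
  · set t := σ ⟨k, hkd⟩ with ht
    have ht0 : 0 ≤ t := hσ0 _
    have key : ∀ i : Fin d, c i * σ i ≤ (if (i : ℕ) < k then σ i - t else 0) + t * c i := by
      intro i
      by_cases h : (i : ℕ) < k
      · simp only [h, if_true]
        have hσi : t ≤ σ i := hσ (by exact Fin.le_def.mpr (le_of_lt h) : i ≤ ⟨k, hkd⟩)
        nlinarith [hc1 i, hc0 i]
      · simp only [h, if_false]
        have hσi : σ i ≤ t := hσ (by exact Fin.le_def.mpr (le_of_not_gt h) : (⟨k, hkd⟩ : Fin d) ≤ i)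
        nlinarith [hc0 i]
    calc ∑ i, c i * σ i
        ≤ ∑ i : Fin d, ((if (i : ℕ) < k then σ i - t else 0) + t * c i) :=
          Finset.sum_le_sum fun i _ => key i
      _ = ∑ i ∈ Finset.univ.filter (fun i : Fin d => (i : ℕ) < k), (σ i - t) + t * ∑ i, c i := by
          rw [Finset.sum_add_distrib, ← Finset.sum_filter, Finset.mul_sum]
      _ = ∑ i ∈ Finset.univ.filter (fun i : Fin d => (i : ℕ) < k), σ i
            - (Finset.univ.filter (fun i : Fin d => (i : ℕ) < k)).card * t + t * ∑ i, c i := by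
          rw [Finset.sum_sub_distrib, Finset.sum_const, nsmul_eq_mul]
      _ ≤ ∑ i ∈ Finset.univ.filter (fun i : Fin d => (i : ℕ) < k), σ i := by
          have hcard : ((Finset.univ.filter (fun i : Fin d => (i : ℕ) < k)).card : ℝ) = k := by
            have := sum_castLE hk (fun _ => (1 : ℝ))
            simp [Finset.sum_const] at this
            exact_mod_cast this.symm
          rw [hcard]
          nlinarith [hcs, ht0]

open Matrix ComplexOrder

lemma feas {d : ℕ} (W : Matrix (Fin d) (Fin d) ℂ) (q : Fin d → ℂ)
    (hWW : Wᴴ * W = Matrix.diagonal q) (hWq : W * Matrix.diagonal q = W) :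
    (W * Wᴴ).PosSemidef ∧ (1 - W * Wᴴ).PosSemidef ∧ (W * Wᴴ).trace = ∑ i, q i := by
  have hpsd : (W * Wᴴ).PosSemidef := Matrix.posSemidef_self_mul_conjTranspose W
  have hidem : (W * Wᴴ) * (W * Wᴴ) = W * Wᴴ := by
    calc W * Wᴴ * (W * Wᴴ) = W * (Wᴴ * W) * Wᴴ := by
          rw [Matrix.mul_assoc, Matrix.mul_assoc, Matrix.mul_assoc]
      _ = W * Wᴴ := by rw [hWW, hWq]
  have hherm : (1 - W * Wᴴ).IsHermitian := (Matrix.isHermitian_one).sub hpsd.1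
  have hsq : (1 - W * Wᴴ) = (1 - W * Wᴴ)ᴴ * (1 - W * Wᴴ) := by
    rw [show (1 - W * Wᴴ)ᴴ = 1 - W * Wᴴ from hherm]
    rw [Matrix.sub_mul, Matrix.one_mul, Matrix.mul_sub, Matrix.mul_one, hidem]
    abel
  refine ⟨hpsd, ?_, ?_⟩
  · rw [hsq]; exact Matrix.posSemidef_conjTranspose_mul_self _
  · rw [Matrix.trace_mul_comm, hWW, Matrix.trace_diagonal]

lemma herm_star_mul_self_mul_eq_diagonal {d : ℕ} {A : Matrix (Fin d) (Fin d) ℂ}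
    (hA : A.IsHermitian) :
    star (hA.eigenvectorUnitary : Matrix (Fin d) (Fin d) ℂ) * A
      * (hA.eigenvectorUnitary : Matrix (Fin d) (Fin d) ℂ)
      = Matrix.diagonal (RCLike.ofReal ∘ hA.eigenvalues) := by
  have := hA.conjStarAlgAut_star_eigenvectorUnitary
  simpa using this

lemma trace_conj_diag {d : ℕ} {A : Matrix (Fin d) (Fin d) ℂ} (hA : A.IsHermitian)
    (q : Fin d → ℂ) :
    ((hA.eigenvectorUnitary : Matrix (Fin d) (Fin d) ℂ) * Matrix.diagonal q
        * (star (hA.eigenvectorUnitary : Matrix (Fin d) (Fin d) ℂ)) * A).trace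
      = ∑ i, q i * (hA.eigenvalues i : ℂ) := by
  set U : Matrix (Fin d) (Fin d) ℂ := (hA.eigenvectorUnitary : Matrix (Fin d) (Fin d) ℂ)
  have h1 : U * Matrix.diagonal q * star U * A = U * (Matrix.diagonal q * (star U * A)) := by
    rw [Matrix.mul_assoc, Matrix.mul_assoc]
  rw [h1, Matrix.trace_mul_comm]
  have h2 : Matrix.diagonal q * (star U * A) * U
      = Matrix.diagonal q * (star U * A * U) := by rw [Matrix.mul_assoc]
  rw [h2, herm_star_mul_self_mul_eq_diagonal hA, Matrix.diagonal_mul_diagonal,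
    Matrix.trace_diagonal]
  rfl

-- diagonal entries of a PSD matrix have nonneg real part, etc.
lemma psd_diag_re {d : ℕ} {G : Matrix (Fin d) (Fin d) ℂ} (hG : G.PosSemidef) (i : Fin d) :
    0 ≤ (G i i).re := by
  have h := hG.diag_nonneg (i := i)
  exact (Complex.le_def.mp h).1

/-- Ky Fan variational upper bound: if `0 ≤ T ≤ 1` and `re tr T ≤ k`, `B` PSD with
descending-sorted eigenvalue function `σ`, then `re tr (T B) ≤ ∑_{i<k} σ i`. -/
lemma upper {d k : ℕ} (hk : k ≤ d) {B T : Matrix (Fin d) (Fin d) ℂ}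
    (hB : B.PosSemidef) (σ : Fin d → ℝ) (hσa : Antitone σ)
    (hσp : ∃ e : Equiv.Perm (Fin d), ∀ i, σ (e i) = hB.1.eigenvalues i)
    (hT : T.PosSemidef) (hT1 : (1 - T).PosSemidef)
    (hTtr : (T.trace).re ≤ (k : ℝ)) :
    ((T * B).trace).re ≤ ∑ i : Fin k, σ (Fin.castLE hk i) := by
  classical
  obtain ⟨e, he⟩ := hσp
  set hH := hB.1
  set U : Matrix (Fin d) (Fin d) ℂ := (hH.eigenvectorUnitary : Matrix (Fin d) (Fin d) ℂ) with hUdef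
  have hUU : U * star U = 1 := (Matrix.mem_unitaryGroup_iff).mp hH.eigenvectorUnitary.2
  have hUU' : star U * U = 1 := (Matrix.mem_unitaryGroup_iff').mp hH.eigenvectorUnitary.2
  set lam : Fin d → ℝ := hH.eigenvalues with hlam
  set G : Matrix (Fin d) (Fin d) ℂ := star U * T * U with hGdef
  have hG : G.PosSemidef := by
    have := hT.conjTranspose_mul_mul_same U
    simpa [hGdef, star_eq_conjTranspose] using this
  have hG1 : (1 - G).PosSemidef := by
    have := hT1.conjTranspose_mul_mul_same U
    have h1 : Uᴴ * (1 - T) * U = 1 - G := by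
      rw [Matrix.mul_sub, Matrix.mul_one, Matrix.sub_mul, ← star_eq_conjTranspose U, hUU', hGdef]
    rwa [h1] at this
  -- trace computation
  have htr : (T * B).trace = ∑ i, G i i * (lam i : ℂ) := by
    conv_lhs => rw [hH.spectral_theorem, Unitary.conjStarAlgAut_apply]
    rw [← Matrix.mul_assoc, ← Matrix.mul_assoc, Matrix.trace_mul_comm,
      ← Matrix.mul_assoc, ← Matrix.mul_assoc]
    have : star U * (T * U) = G := by rw [hGdef, Matrix.mul_assoc]
    rw [show star U * T * U * Matrix.diagonal (RCLike.ofReal ∘ lam)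
        = G * Matrix.diagonal (RCLike.ofReal ∘ lam) by rw [hGdef]]
    rw [Matrix.trace]
    simp [Matrix.diag, Matrix.mul_diagonal]
  set c : Fin d → ℝ := fun i => (G i i).re with hc
  have hre : ((T * B).trace).re = ∑ i, c i * lam i := by
    rw [htr]
    rw [Complex.re_sum]
    refine Finset.sum_congr rfl fun i _ => ?_
    simp [Complex.mul_re, hc]
  rw [hre]
  have hc0 : ∀ i, 0 ≤ c i := fun i => psd_diag_re hG i
  have hc1 : ∀ i, c i ≤ 1 := by
    intro i
    have := psd_diag_re hG1 i
    simp only [Matrix.sub_apply, Matrix.one_apply_eq, Complex.sub_re, Complex.one_re] at this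
    linarith
  have hcs : ∑ i, c i ≤ (k : ℝ) := by
    have hGtr : G.trace = T.trace := by
      rw [hGdef, Matrix.trace_mul_comm, ← Matrix.mul_assoc, hUU, Matrix.one_mul]
    have : ∑ i, c i = (G.trace).re := by
      rw [Matrix.trace, Complex.re_sum]; rfl
    rw [this, hGtr]; exact hTtr
  -- reindex by permutation
  have hreidx : ∑ i, c i * lam i = ∑ i, c (e.symm i) * σ i := by
    rw [← Equiv.sum_comp e (fun i => c (e.symm i) * σ i)]
    refine Finset.sum_congr rfl fun i _ => by rw [Equiv.symm_apply_apply, he]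
  rw [hreidx]
  refine comb hk σ (fun i => c (e.symm i)) hσa ?_ (fun i => hc0 _) (fun i => hc1 _) ?_
  · intro i
    have : σ i = lam (e.symm i) := by rw [← he (e.symm i), Equiv.apply_symm_apply]
    rw [this]
    exact hB.eigenvalues_nonneg _
  · rw [Equiv.sum_comp e.symm c]
    exact hcs

/-- The expected spectrum of Alice's local state after a generalized measurement
`f₁, …, f_m` majorizes the spectrum of her current density matrix `ρ`: for every `k`,
`∑_j ∑_{i=1}^k λᵢ(f_j ρ f_jᴴ) ≥ ∑_{i=1}^k λᵢ(ρ)`. -/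
theorem expected_spectrum_majorizes_measured {d m : ℕ}
    (ρ : Matrix (Fin d) (Fin d) ℂ) (hρ : ρ.PosSemidef) (hρtr : ρ.trace = 1)
    (f : Fin m → Matrix (Fin d) (Fin d) ℂ)
    (hf : ∑ j : Fin m, (f j)ᴴ * f j = 1)
    (hherm : ∀ j, (f j * ρ * (f j)ᴴ).IsHermitian)
    (μ : Fin m → Fin d → ℝ) (hμa : ∀ j, Antitone (μ j))
    (hμp : ∀ j, ∃ e : Equiv.Perm (Fin d), ∀ i, μ j (e i) = (hherm j).eigenvalues i)
    (ν : Fin d → ℝ) (hνa : Antitone ν)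
    (hνp : ∃ e : Equiv.Perm (Fin d), ∀ i, ν (e i) = hρ.isHermitian.eigenvalues i) :
    ∀ (k : ℕ), 1 ≤ k → ∀ (hk : k ≤ d),
      ∑ i : Fin k, ν (Fin.castLE hk i) ≤
        ∑ j : Fin m, ∑ i : Fin k, μ j (Fin.castLE hk i) := by
  intro k hk1 hk
  classical
  obtain ⟨R, hRh, hRR⟩ : ∃ R : Matrix (Fin d) (Fin d) ℂ, Rᴴ = R ∧ R * R = ρ :=
    open scoped MatrixOrder in
    ⟨CFC.sqrt ρ, (CFC.sqrt_nonneg ρ).posSemidef.1, CFC.sqrt_mul_sqrt_self ρ hρ.nonneg⟩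
  set A : Fin m → Matrix (Fin d) (Fin d) ℂ := fun j => f j * R with hAdef
  have hsum : ∑ j, (A j)ᴴ * A j = ρ := by
    have h1 : ∀ j, (A j)ᴴ * A j = R * ((f j)ᴴ * f j) * R := by
      intro j
      simp only [hAdef, Matrix.conjTranspose_mul, hRh]
      noncomm_ring
    simp_rw [h1]
    rw [← Finset.sum_mul, ← Finset.mul_sum, hf, Matrix.mul_one, hRR]
  have hC : ∀ j, f j * ρ * (f j)ᴴ = A j * (A j)ᴴ := by
    intro j
    simp only [hAdef, Matrix.conjTranspose_mul, hRh]
    rw [← hRR]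
    noncomm_ring
  -- the projection onto the top-k eigenspace of ρ
  obtain ⟨e, he⟩ := hνp
  set lam0 : Fin d → ℝ := hρ.isHermitian.eigenvalues with hlam0
  set U : Matrix (Fin d) (Fin d) ℂ := (hρ.isHermitian.eigenvectorUnitary : Matrix (Fin d) (Fin d) ℂ) with hUdef
  have hUU : U * star U = 1 := (Matrix.mem_unitaryGroup_iff).mp hρ.isHermitian.eigenvectorUnitary.2
  have hUU' : star U * U = 1 := (Matrix.mem_unitaryGroup_iff').mp hρ.isHermitian.eigenvectorUnitary.2
  set S : Finset (Fin d) := Finset.image (fun i : Fin k => e.symm (Fin.castLE hk i)) Finset.univ with hSdef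
  have hinj : Function.Injective (fun i : Fin k => e.symm (Fin.castLE hk i)) :=
    e.symm.injective.comp (Fin.castLE_injective hk)
  have hScard : S.card = k := by
    rw [hSdef, Finset.card_image_of_injective _ hinj, Finset.card_univ, Fintype.card_fin]
  set q : Fin d → ℂ := fun i => if i ∈ S then 1 else 0 with hq
  have hqsq : ∀ i, q i * q i = q i := by intro i; by_cases h : i ∈ S <;> simp [hq, h]
  have hqstar : ∀ i, star (q i) = q i := by intro i; by_cases h : i ∈ S <;> simp [hq, h]
  have hdstar : Matrix.diagonal (star q) = Matrix.diagonal q :=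
    Matrix.diagonal_eq_diagonal_iff.mpr fun i => hqstar i
  have hdsq : Matrix.diagonal (fun i => q i * q i) = Matrix.diagonal q :=
    Matrix.diagonal_eq_diagonal_iff.mpr fun i => hqsq i
  set W₀ : Matrix (Fin d) (Fin d) ℂ := U * Matrix.diagonal q with hW₀
  have hW₀conj : W₀ᴴ = Matrix.diagonal q * star U := by
    rw [hW₀, Matrix.conjTranspose_mul, Matrix.diagonal_conjTranspose, hdstar,
      star_eq_conjTranspose]
  have hWW₀ : W₀ᴴ * W₀ = Matrix.diagonal q := by
    rw [hW₀conj, hW₀]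
    calc Matrix.diagonal q * star U * (U * Matrix.diagonal q)
        = Matrix.diagonal q * (star U * U) * Matrix.diagonal q := by noncomm_ring
      _ = Matrix.diagonal q := by
          rw [hUU', Matrix.mul_one, Matrix.diagonal_mul_diagonal, hdsq]
  have hWq₀ : W₀ * Matrix.diagonal q = W₀ := by
    rw [hW₀, Matrix.mul_assoc, Matrix.diagonal_mul_diagonal, hdsq]
  obtain ⟨hP, hP1, hPtr⟩ := feas W₀ q hWW₀ hWq₀
  set P : Matrix (Fin d) (Fin d) ℂ := W₀ * W₀ᴴ with hPdef
  have hqsum : ∑ i, q i = (k : ℂ) := by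
    rw [hq]
    rw [Finset.sum_ite_mem, Finset.univ_inter, Finset.sum_const, hScard]
    simp
  have hPtrk : (P.trace).re ≤ (k : ℝ) := by
    rw [hPdef, hPtr, hqsum]; simp
  -- P = U * diagonal q * Uᴴ
  have hPeq : P = U * Matrix.diagonal q * (star U) := by
    rw [hPdef, hW₀, hW₀conj]
    calc U * Matrix.diagonal q * (Matrix.diagonal q * star U)
        = U * (Matrix.diagonal q * Matrix.diagonal q) * star U := by noncomm_ring
      _ = U * Matrix.diagonal q * star U := by
          rw [Matrix.diagonal_mul_diagonal, hdsq]
  -- LHS = re tr (P ρ)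
  have hν' : ∀ x, ν x = lam0 (e.symm x) := fun x => by
    rw [← he (e.symm x), Equiv.apply_symm_apply]
  have hLHS : ∑ i : Fin k, ν (Fin.castLE hk i) = ∑ i ∈ S, lam0 i := by
    rw [hSdef, Finset.sum_image (fun x _ y _ h => hinj h)]
    exact Finset.sum_congr rfl fun i _ => hν' _
  have htrP : ((P * ρ).trace).re = ∑ i ∈ S, lam0 i := by
    rw [hPeq, trace_conj_diag hρ.isHermitian q]
    rw [show ∑ i, q i * (lam0 i : ℂ) = ∑ i ∈ S, (lam0 i : ℂ) by
      rw [hq]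
      simp only [ite_mul, one_mul, zero_mul]
      rw [Finset.sum_ite_mem, Finset.univ_inter]]
    rw [← Complex.ofReal_sum]
    exact Complex.ofReal_re _
  -- split the trace over the measurement
  have hsplit : ((P * ρ).trace) = ∑ j, ((P * ((A j)ᴴ * A j)).trace) := by
    rw [← hsum, Finset.mul_sum, Matrix.trace_sum]
  -- per-measurement bound
  have hj : ∀ j : Fin m, ((P * ((A j)ᴴ * A j)).trace).re
      ≤ ∑ i : Fin k, μ j (Fin.castLE hk i) := by
    intro j
    set Bj : Matrix (Fin d) (Fin d) ℂ := (A j)ᴴ * A j with hBdef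
    have hBj : Bj.PosSemidef := Matrix.posSemidef_conjTranspose_mul_self (A j)
    set lam1 : Fin d → ℝ := hBj.1.eigenvalues with hlam1
    have hlam1nn : ∀ i, 0 ≤ lam1 i := fun i => hBj.eigenvalues_nonneg i
    set V : Matrix (Fin d) (Fin d) ℂ := (hBj.1.eigenvectorUnitary : Matrix (Fin d) (Fin d) ℂ) with hVdef
    have hVV : V * star V = 1 := (Matrix.mem_unitaryGroup_iff).mp hBj.1.eigenvectorUnitary.2
    have hVV' : star V * V = 1 := (Matrix.mem_unitaryGroup_iff').mp hBj.1.eigenvectorUnitary.2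
    have hVBV : star V * Bj * V = Matrix.diagonal (fun i => (lam1 i : ℂ)) :=
      herm_star_mul_self_mul_eq_diagonal hBj.1
    -- sorted eigenvalues of Bj
    set p : Equiv.Perm (Fin d) := Tuple.sort (fun i => -lam1 i) with hpdef
    set σ : Fin d → ℝ := fun i => lam1 (p i) with hσdef
    have hσa : Antitone σ := by
      intro a b hab
      have := Tuple.monotone_sort (fun i => -lam1 i) hab
      simp only [Function.comp_apply] at this
      simp only [hσdef]
      linarith
    have hσp : ∃ e' : Equiv.Perm (Fin d), ∀ i, σ (e' i) = hBj.1.eigenvalues i :=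
      ⟨p.symm, fun i => by simp [hσdef, Equiv.apply_symm_apply]; rfl⟩
    have step1 : ((P * Bj).trace).re ≤ ∑ i : Fin k, σ (Fin.castLE hk i) :=
      upper hk hBj σ hσa hσp hP hP1 hPtrk
    -- top-k index set for Bj
    set S1 : Finset (Fin d) := Finset.image (fun i : Fin k => p (Fin.castLE hk i)) Finset.univ with hS1def
    have hinj1 : Function.Injective (fun i : Fin k => p (Fin.castLE hk i)) :=
      p.injective.comp (Fin.castLE_injective hk)
    have hS1card : S1.card = k := by
      rw [hS1def, Finset.card_image_of_injective _ hinj1, Finset.card_univ, Fintype.card_fin]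
    have step2 : ∑ i : Fin k, σ (Fin.castLE hk i) = ∑ i ∈ S1, lam1 i := by
      rw [hS1def, Finset.sum_image (fun x _ y _ h => hinj1 h)]
    -- transfer matrix
    set S1' : Finset (Fin d) := S1.filter (fun i => lam1 i ≠ 0) with hS1'def
    set g : Fin d → ℝ := fun i => if i ∈ S1' then (Real.sqrt (lam1 i))⁻¹ else 0 with hgdef
    set q' : Fin d → ℂ := fun i => if i ∈ S1' then 1 else 0 with hq'def
    set W : Matrix (Fin d) (Fin d) ℂ := A j * V * Matrix.diagonal (fun i => (g i : ℂ)) with hWdef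
    have hdgstar : Matrix.diagonal (star (fun i => (g i : ℂ))) = Matrix.diagonal (fun i => (g i : ℂ)) :=
      Matrix.diagonal_eq_diagonal_iff.mpr fun i => by simp
    have hWconj : Wᴴ = Matrix.diagonal (fun i => (g i : ℂ)) * (star V * (A j)ᴴ) := by
      rw [hWdef, Matrix.conjTranspose_mul, Matrix.conjTranspose_mul,
        Matrix.diagonal_conjTranspose, hdgstar, star_eq_conjTranspose]
    have hglam : ∀ i, (g i : ℂ) * (lam1 i : ℂ) * (g i : ℂ) = q' i := by
      intro i
      by_cases h : i ∈ S1'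
      · have hne : lam1 i ≠ 0 := (Finset.mem_filter.mp h).2
        have hpos : 0 < lam1 i := lt_of_le_of_ne (hlam1nn i) (Ne.symm hne)
        simp only [hgdef, hq'def, h, if_true]
        rw [← Complex.ofReal_mul, ← Complex.ofReal_mul]
        rw [show (Real.sqrt (lam1 i))⁻¹ * lam1 i * (Real.sqrt (lam1 i))⁻¹ = 1 by
          rw [show lam1 i = Real.sqrt (lam1 i) * Real.sqrt (lam1 i) from
            (Real.mul_self_sqrt (hlam1nn i)).symm]
          field_simp
          rw [Real.sqrt_sq (Real.sqrt_nonneg _)]]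
        simp
      · simp [hgdef, hq'def, h]
    have hWW : Wᴴ * W = Matrix.diagonal q' := by
      rw [hWconj, hWdef]
      calc Matrix.diagonal (fun i => (g i : ℂ)) * (star V * (A j)ᴴ) * (A j * V * Matrix.diagonal (fun i => (g i : ℂ)))
          = Matrix.diagonal (fun i => (g i : ℂ)) * (star V * Bj * V) * Matrix.diagonal (fun i => (g i : ℂ)) := by
            rw [hBdef]
            noncomm_ring
        _ = Matrix.diagonal q' := by
            rw [hVBV, Matrix.diagonal_mul_diagonal, Matrix.diagonal_mul_diagonal]
            exact Matrix.diagonal_eq_diagonal_iff.mpr fun i => by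
              linear_combination hglam i
    have hWq : W * Matrix.diagonal q' = W := by
      have hdd : Matrix.diagonal (fun i => (g i : ℂ)) * Matrix.diagonal q'
          = Matrix.diagonal (fun i => (g i : ℂ)) := by
        rw [Matrix.diagonal_mul_diagonal]
        exact Matrix.diagonal_eq_diagonal_iff.mpr fun i => by
          by_cases h : i ∈ S1' <;> simp [hgdef, hq'def, h]
      rw [hWdef, Matrix.mul_assoc (A j * V), hdd]
    obtain ⟨hT, hT1, hTtr⟩ := feas W q' hWW hWq
    have hTtrk : ((W * Wᴴ).trace).re ≤ (k : ℝ) := by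
      rw [hTtr, hq'def]
      rw [Finset.sum_ite_mem, Finset.univ_inter, Finset.sum_const]
      simp only [nsmul_eq_mul, mul_one]
      rw [Complex.natCast_re]
      have : S1'.card ≤ k := le_trans (Finset.card_filter_le _ _) (le_of_eq hS1card)
      exact_mod_cast this
    -- PSD of f j ρ (f j)ᴴ
    have hCj : (f j * ρ * (f j)ᴴ).PosSemidef := by
      rw [hC j]; exact Matrix.posSemidef_self_mul_conjTranspose (A j)
    -- trace transfer computation
    have step3 : ((W * Wᴴ * (f j * ρ * (f j)ᴴ)).trace) = ((∑ i ∈ S1, lam1 i : ℝ) : ℂ) := by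
      rw [hC j]
      have h1 : W * Wᴴ * (A j * (A j)ᴴ) = W * (Wᴴ * (A j * (A j)ᴴ)) := by
        rw [Matrix.mul_assoc]
      rw [h1, Matrix.trace_mul_comm]
      have h2 : Wᴴ * (A j * (A j)ᴴ) * W
          = Matrix.diagonal (fun i => (g i : ℂ)) * (star V * (Bj * Bj) * V)
            * Matrix.diagonal (fun i => (g i : ℂ)) := by
        rw [hWconj, hWdef, hBdef]
        noncomm_ring
      have h3 : star V * (Bj * Bj) * V = Matrix.diagonal (fun i => (lam1 i : ℂ))
          * Matrix.diagonal (fun i => (lam1 i : ℂ)) := by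
        rw [← hVBV]
        calc star V * (Bj * Bj) * V = (star V * Bj * V) * (star V * Bj * V) := by
              rw [show star V * Bj * V * (star V * Bj * V)
                  = star V * Bj * (V * star V) * Bj * V by noncomm_ring, hVV]
              noncomm_ring
          _ = _ := rfl
      rw [h2, h3, Matrix.diagonal_mul_diagonal, Matrix.diagonal_mul_diagonal,
        Matrix.diagonal_mul_diagonal, Matrix.trace_diagonal]
      have h4 : ∀ i, (g i : ℂ) * ((lam1 i : ℂ) * (lam1 i : ℂ)) * (g i : ℂ)
          = if i ∈ S1' then (lam1 i : ℂ) else 0 := by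
        intro i
        have := hglam i
        by_cases h : i ∈ S1'
        · rw [hq'def] at this
          simp only [h, if_true] at this ⊢
          calc (g i : ℂ) * ((lam1 i : ℂ) * (lam1 i : ℂ)) * (g i : ℂ)
              = ((g i : ℂ) * (lam1 i : ℂ) * (g i : ℂ)) * (lam1 i : ℂ) := by ring
            _ = (lam1 i : ℂ) := by rw [this, one_mul]
        · simp [hgdef, h]
      simp_rw [h4]
      rw [Finset.sum_ite_mem, Finset.univ_inter]
      rw [hS1'def, Finset.sum_filter_of_ne (by
        intro x _ hx
        simp only [ne_eq, Complex.ofReal_eq_zero] at hx ⊢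
        exact hx)]
      rw [Complex.ofReal_sum]
    have step3' : ((W * Wᴴ * (f j * ρ * (f j)ᴴ)).trace).re = ∑ i ∈ S1, lam1 i := by
      rw [step3, Complex.ofReal_re]
    have step4 : ((W * Wᴴ * (f j * ρ * (f j)ᴴ)).trace).re
        ≤ ∑ i : Fin k, μ j (Fin.castLE hk i) :=
      upper hk hCj (μ j) (hμa j) (hμp j) hT hT1 hTtrk
    calc ((P * Bj).trace).re ≤ ∑ i : Fin k, σ (Fin.castLE hk i) := step1
      _ = ∑ i ∈ S1, lam1 i := step2
      _ = ((W * Wᴴ * (f j * ρ * (f j)ᴴ)).trace).re := step3'.symm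
      _ ≤ ∑ i : Fin k, μ j (Fin.castLE hk i) := step4
  -- assemble
  calc ∑ i : Fin k, ν (Fin.castLE hk i) = ((P * ρ).trace).re := by rw [hLHS, htrP]
    _ = ∑ j, ((P * ((A j)ᴴ * A j)).trace).re := by rw [hsplit, Complex.re_sum]
    _ ≤ ∑ j, ∑ i : Fin k, μ j (Fin.castLE hk i) := Finset.sum_le_sum fun j _ => hj j
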